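/- For a bit string x of length n with LeadingOnes value L = Lo(x) < n, if an offspring y is created by flipping exactly ℓ distinct positions of x chosen uniformly at random (1 ≤ ℓ ≤ n - L), then the probability that Lo(y) > Lo(x) equals C(n-L-1, ℓ-1) / C(n, ℓ). -/

import Mathlib

/-- Number of leading ones of the first `n` bits of `x`. -/
def lo (n : ℕ) (x : ℕ → Bool) : ℕ :=
  ((Finset.range n).filter (fun i => ∀ j ≤ i, x j = true)).card

/-- Flip the bits of `x` at the positions in `S`. -/
def flipS (S : Finset ℕ) (x : ℕ → Bool) : ℕ → Bool :=
  fun i => if i ∈ S then !(x i) else x i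

lemma lo_mem_iff (n : ℕ) (x : ℕ → Bool) (i : ℕ) (hi : i < n) :
    (∀ j ≤ i, x j = true) ↔ i < lo n x := by
  constructor
  · intro h
    have hsub : Finset.range (i+1) ⊆
        (Finset.range n).filter (fun i => ∀ j ≤ i, x j = true) := by
      intro k hk
      simp only [Finset.mem_range] at hk
      simp only [Finset.mem_filter, Finset.mem_range]
      exact ⟨lt_of_lt_of_le hk hi, fun j hj => h j (hj.trans (Nat.lt_succ_iff.mp hk))⟩
    have := Finset.card_le_card hsub
    simpa [lo] using this
  · intro h
    by_contra hc
    have hsub : (Finset.range n).filter (fun i => ∀ j ≤ i, x j = true) ⊆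
        Finset.range i := by
      intro k hk
      simp only [Finset.mem_filter, Finset.mem_range] at hk
      simp only [Finset.mem_range]
      by_contra hk2
      push_neg at hk2
      exact hc (fun j hj => hk.2 j (hj.trans hk2))
    have hle := Finset.card_le_card hsub
    simp only [Finset.card_range] at hle
    have : lo n x ≤ i := hle
    omega

lemma lo_lt (n : ℕ) (x : ℕ → Bool) (j : ℕ) (hj : j < lo n x) : x j = true := by
  have hln : lo n x ≤ n := by
    have := Finset.card_filter_le (Finset.range n) (fun i => ∀ j ≤ i, x j = true)
    simpa [lo] using this
  exact ((lo_mem_iff n x j (by omega)).mpr hj) j le_rfl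

lemma lo_at (n : ℕ) (x : ℕ → Bool) (hL : lo n x < n) : x (lo n x) = false := by
  by_contra hc
  have hx : x (lo n x) = true := by
    cases h : x (lo n x) <;> simp_all
  have : lo n x < lo n x := (lo_mem_iff n x (lo n x) hL).mp (by
    intro j hj
    rcases eq_or_lt_of_le hj with h | h
    · rw [h]; exact hx
    · exact lo_lt n x j h)
  omega

lemma incr_iff (n : ℕ) (x : ℕ → Bool) (hL : lo n x < n) (S : Finset ℕ) :
    lo n x < lo n (flipS S x) ↔ lo n x ∈ S ∧ ∀ j < lo n x, j ∉ S := by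
  set L := lo n x with hLdef
  constructor
  · intro h
    have hmem : ∀ j ≤ L, flipS S x j = true :=
      (lo_mem_iff n (flipS S x) L hL).mpr h
    constructor
    · have := hmem L le_rfl
      simp only [flipS] at this
      by_contra hc
      rw [if_neg hc] at this
      rw [lo_at n x hL] at this
      exact Bool.false_ne_true this
    · intro j hj hjS
      have := hmem j (le_of_lt hj)
      simp only [flipS, if_pos hjS] at this
      rw [lo_lt n x j hj] at this
      simp at this
  · rintro ⟨hLS, hnot⟩
    apply (lo_mem_iff n (flipS S x) L hL).mp
    intro j hj
    rcases eq_or_lt_of_le hj with h | h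
    · subst h
      simp only [flipS, if_pos hLS, lo_at n x hL]
      simp [show x L = false from lo_at n x hL]
    · simp only [flipS, if_neg (hnot j h), lo_lt n x j h]

theorem stmt0 (n ℓ : ℕ) (x : ℕ → Bool) (hL : lo n x < n)
    (h1 : 1 ≤ ℓ) (h2 : ℓ ≤ n - lo n x) :
    ((((Finset.range n).powersetCard ℓ).filter
        (fun S => lo n x < lo n (flipS S x))).card : ℝ) / (n.choose ℓ : ℝ)
      = ((n - lo n x - 1).choose (ℓ - 1) : ℝ) / (n.choose ℓ : ℝ) := by
  set L := lo n x with hLdef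
  have hcard : (((Finset.range n).powersetCard ℓ).filter
      (fun S => lo n x < lo n (flipS S x))).card
      = (n - L - 1).choose (ℓ - 1) := by
    have key : (((Finset.range n).powersetCard ℓ).filter
        (fun S => lo n x < lo n (flipS S x))).card
        = ((Finset.Ico (L+1) n).powersetCard (ℓ-1)).card :=
      Finset.card_bij
      (fun (S : Finset ℕ) (_ : S ∈ ((Finset.range n).powersetCard ℓ).filter
        (fun S => lo n x < lo n (flipS S x))) => S.erase L)
      (fun S hS => by
        simp only [Finset.mem_filter, Finset.mem_powersetCard] at hS
        obtain ⟨⟨hsub, hc⟩, hincr⟩ := hS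
        rw [incr_iff n x hL S] at hincr
        obtain ⟨hLS, hnot⟩ := hincr
        simp only [Finset.mem_powersetCard]
        constructor
        · intro j hj
          simp only [Finset.mem_erase] at hj
          obtain ⟨hjL, hjS⟩ := hj
          have hjn : j < n := Finset.mem_range.mp (hsub hjS)
          have : ¬ j < L := fun h => hnot j h hjS
          simp only [Finset.mem_Ico]
          omega
        · rw [Finset.card_erase_of_mem hLS, hc])
      (fun S hS T hT h => by
        simp only [Finset.mem_filter, Finset.mem_powersetCard] at hS hT
        have hLS := ((incr_iff n x hL S).mp hS.2).1
        have hLT := ((incr_iff n x hL T).mp hT.2).1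
        have h' : S.erase L = T.erase L := h
        rw [← Finset.insert_erase hLS, ← Finset.insert_erase hLT, h'])
      (fun T hT => by
        simp only [Finset.mem_powersetCard] at hT
        obtain ⟨hsub, hc⟩ := hT
        refine ⟨insert L T, ?_, ?_⟩
        · have hLnT : L ∉ T := by
            intro h
            have := Finset.mem_Ico.mp (hsub h)
            omega
          simp only [Finset.mem_filter, Finset.mem_powersetCard]
          refine ⟨⟨?_, ?_⟩, ?_⟩
          · intro j hj
            simp only [Finset.mem_insert] at hj
            rcases hj with h | h
            · exact Finset.mem_range.mpr (h ▸ hL)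
            · have := Finset.mem_Ico.mp (hsub h)
              exact Finset.mem_range.mpr this.2
          · rw [Finset.card_insert_of_notMem hLnT, hc]
            omega
          · rw [incr_iff n x hL]
            refine ⟨Finset.mem_insert_self _ _, fun j hj hjmem => ?_⟩
            simp only [Finset.mem_insert] at hjmem
            rcases hjmem with h | h
            · omega
            · have := Finset.mem_Ico.mp (hsub h)
              omega
        · show (insert L T).erase L = T
          exact Finset.erase_insert (by
            intro h
            have := Finset.mem_Ico.mp (hsub h)
            omega))
    rw [key]
    rw [Finset.card_powersetCard, Nat.card_Ico]
    congr 1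
  rw [hcard]
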